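/- Let n, f be natural numbers with n > 5f, let P be a multiset of n real numbers, and let U be a submultiset of P of cardinality m with m ≥ n − f. Then the extreme correct robots satisfy the election predicate irrespective of the positions of the Byzantine robots: min U ≤ P_{f+1} and P_{n−f} ≤ max U. -/
import Mathlib


/-- `kth P k` is the `k`-th smallest element (1-based, counted with multiplicity)
of the multiset `P` of reals. -/
noncomputable def kth (P : Multiset ℝ) (k : ℕ) : ℝ :=
  (P.sort (· ≤ ·)).getD (k - 1) 0

/-- The minimum of a (nonempty) multiset of reals: its 1st smallest element. -/
noncomputable def mmin (U : Multiset ℝ) : ℝ := kth U 1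

/-- The maximum of a (nonempty) multiset of reals: its `card`-th smallest element. -/
noncomputable def mmax (U : Multiset ℝ) : ℝ := kth U (Multiset.card U)

lemma mmin_le_mem (U : Multiset ℝ) (x : ℝ) (hx : x ∈ U) : mmin U ≤ x := by
  have hs := U.pairwise_sort (· ≤ ·)
  have hxL : x ∈ U.sort (· ≤ ·) := (Multiset.mem_sort _).mpr hx
  unfold mmin kth
  cases hL : U.sort (· ≤ ·) with
  | nil => rw [hL] at hxL; simp at hxL
  | cons h t =>
    rw [hL] at hxL hs
    simp only [Nat.sub_self, List.getD_cons_zero]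
    rcases List.mem_cons.mp hxL with rfl | hxt
    · exact le_refl _
    · exact (List.pairwise_cons.mp hs).1 x hxt

lemma mem_le_mmax (U : Multiset ℝ) (x : ℝ) (hx : x ∈ U) : x ≤ mmax U := by
  have hs := U.pairwise_sort (· ≤ ·)
  have hxL : x ∈ U.sort (· ≤ ·) := (Multiset.mem_sort _).mpr hx
  have hlen : Multiset.card U = (U.sort (· ≤ ·)).length := (U.length_sort _).symm
  unfold mmax kth
  set L := U.sort (· ≤ ·) with hLdef
  obtain ⟨i, rfl⟩ := List.mem_iff_get.mp hxL
  have h1 : 1 ≤ L.length := Nat.one_le_iff_ne_zero.mpr (by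
    intro h0; exact absurd i.2 (by omega))
  rw [hlen, List.getD_eq_getElem _ _ (by omega)]
  have h2 : L.get i ≤ L.get ⟨L.length - 1, by omega⟩ :=
    hs.rel_get_of_le (by simp only [Fin.le_def]; omega)
  simpa using h2

lemma count_bot (P : Multiset ℝ) (k : ℕ) (hk : k < (P.sort (· ≤ ·)).length) :
    k + 1 ≤ Multiset.card (P.filter (fun x => x ≤ (P.sort (· ≤ ·)).getD k 0)) := by
  set L := P.sort (· ≤ ·) with hL
  have hs := P.pairwise_sort (· ≤ ·)
  have hPL : (L : Multiset ℝ) = P := P.sort_eq _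
  rw [← hPL, Multiset.filter_coe, Multiset.coe_card]
  have heq : (L.take (k+1)).filter (fun x => decide (x ≤ L.getD k 0)) = L.take (k+1) := by
    apply List.filter_eq_self.mpr
    intro y hy
    obtain ⟨j, hj, rfl⟩ := List.mem_iff_getElem.mp hy
    have hjlt : j < k + 1 := by
      have := hj; rw [List.length_take] at this; omega
    simp only [List.getElem_take, decide_eq_true_eq, List.getD_eq_getElem _ _ hk]
    have h2 : L.get ⟨j, by omega⟩ ≤ L.get ⟨k, hk⟩ :=
      hs.rel_get_of_le (by simp only [Fin.mk_le_mk]; omega)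
    simpa using h2
  have hsub : List.Sublist ((L.take (k+1)).filter (fun x => decide (x ≤ L.getD k 0)))
      (L.filter (fun x => decide (x ≤ L.getD k 0))) :=
    (List.take_sublist _ _).filter _
  have hlen : ((L.take (k+1)).filter (fun x => decide (x ≤ L.getD k 0))).length = k + 1 := by
    rw [heq, List.length_take]; omega
  have := hsub.length_le
  omega

lemma count_top (P : Multiset ℝ) (k : ℕ) (hk : k < (P.sort (· ≤ ·)).length) :
    (P.sort (· ≤ ·)).length - k ≤
      Multiset.card (P.filter (fun x => (P.sort (· ≤ ·)).getD k 0 ≤ x)) := by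
  set L := P.sort (· ≤ ·) with hL
  have hs := P.pairwise_sort (· ≤ ·)
  have hPL : (L : Multiset ℝ) = P := P.sort_eq _
  rw [← hPL, Multiset.filter_coe, Multiset.coe_card]
  have heq : (L.drop k).filter (fun x => decide (L.getD k 0 ≤ x)) = L.drop k := by
    apply List.filter_eq_self.mpr
    intro y hy
    obtain ⟨j, hj, rfl⟩ := List.mem_iff_getElem.mp hy
    have hjlt : k + j < L.length := by
      have := hj; rw [List.length_drop] at this; omega
    simp only [List.getElem_drop, decide_eq_true_eq, List.getD_eq_getElem _ _ hk]
    have h2 : L.get ⟨k, hk⟩ ≤ L.get ⟨k + j, hjlt⟩ :=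
      hs.rel_get_of_le (by simp only [Fin.mk_le_mk]; omega)
    simpa using h2
  have hsub : List.Sublist ((L.drop k).filter (fun x => decide (L.getD k 0 ≤ x)))
      (L.filter (fun x => decide (L.getD k 0 ≤ x))) :=
    (List.drop_sublist _ _).filter _
  have hlen : ((L.drop k).filter (fun x => decide (L.getD k 0 ≤ x))).length = L.length - k := by
    rw [heq, List.length_drop]
  have := hsub.length_le
  omega

theorem stmt_4 (n f : ℕ) (hnf : n > 5 * f) (P U : Multiset ℝ)
    (hP : Multiset.card P = n) (hUP : U ≤ P) (m : ℕ) (hm : Multiset.card U = m)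
    (hmf : m ≥ n - f) :
    mmin U ≤ kth P (f + 1) ∧ kth P (n - f) ≤ mmax U := by
  have hlenL : (P.sort (· ≤ ·)).length = n := by rw [Multiset.length_sort, hP]
  constructor
  · -- mmin U ≤ kth P (f+1)
    have hk : f < (P.sort (· ≤ ·)).length := by omega
    set a := kth P (f + 1) with ha
    have ha' : a = (P.sort (· ≤ ·)).getD f 0 := by simp [ha, kth]
    have hbot := count_bot P f hk
    have hex : ∃ x ∈ U, x ≤ a := by
      by_contra hc
      push_neg at hc
      have hUeq : U.filter (fun x => ¬ x ≤ a) = U :=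
        Multiset.filter_eq_self.mpr (fun x hx => not_le.mpr (hc x hx))
      have hle : Multiset.card (U.filter (fun x => ¬ x ≤ a)) ≤
          Multiset.card (P.filter (fun x => ¬ x ≤ a)) :=
        Multiset.card_le_card (Multiset.filter_le_filter _ hUP)
      have hsplit : Multiset.card (P.filter (fun x => x ≤ a)) +
          Multiset.card (P.filter (fun x => ¬ x ≤ a)) = n := by
        rw [← Multiset.card_add, Multiset.filter_add_not, hP]
      rw [hUeq, hm] at hle
      rw [← ha'] at hbot
      omega
    obtain ⟨x, hxU, hxa⟩ := hex
    exact (mmin_le_mem U x hxU).trans hxa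
  · -- kth P (n-f) ≤ mmax U
    have hk : n - f - 1 < (P.sort (· ≤ ·)).length := by omega
    set b := kth P (n - f) with hb
    have hb' : b = (P.sort (· ≤ ·)).getD (n - f - 1) 0 := by simp [hb, kth]
    have htop := count_top P (n - f - 1) hk
    rw [hlenL] at htop
    have hex : ∃ x ∈ U, b ≤ x := by
      by_contra hc
      push_neg at hc
      have hUeq : U.filter (fun x => ¬ b ≤ x) = U :=
        Multiset.filter_eq_self.mpr (fun x hx => not_le.mpr (hc x hx))
      have hle : Multiset.card (U.filter (fun x => ¬ b ≤ x)) ≤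
          Multiset.card (P.filter (fun x => ¬ b ≤ x)) :=
        Multiset.card_le_card (Multiset.filter_le_filter _ hUP)
      have hsplit : Multiset.card (P.filter (fun x => b ≤ x)) +
          Multiset.card (P.filter (fun x => ¬ b ≤ x)) = n := by
        rw [← Multiset.card_add, Multiset.filter_add_not, hP]
      rw [hUeq, hm] at hle
      rw [← hb'] at htop
      omega
    obtain ⟨x, hxU, hxb⟩ := hex
    exact hxb.trans (mem_le_mmax U x hxU)
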